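/- Let p be an odd prime and G a finite abelian p-group of p-class c (i.e., exponent p^c) with generator rank g, and let u be the number of cyclic factors of order strictly less than p^c in the invariant factor decomposition of G. Writing W for the abelianized quotient F^{ab}/P_c, i.e., W = (ℤ/p^c)^g, the number of (g+1)-tuples in Φ(W)^{g+1} generating a fixed subgroup R ≤ W with W/R ≅ G is |Φ(R)|^{g+1} · ∏_{k=1}^{u} (p^{g+1} − p^{u−k}). -/

import Mathlib

open Function LinearMap

section SpanCount

variable {F : Type*} [Field F] [Fintype F]

private lemma aux_eval {u : ℕ} (φ : (Fin u → F) →ₗ[F] F) (y : Fin u → F) :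
    φ y = ∑ i, y i * φ (Pi.single i 1) := by
  conv_lhs => rw [← Finset.univ_sum_single y]
  rw [map_sum]
  refine Finset.sum_congr rfl fun i _ => ?_
  have h : Pi.single i (y i) = y i • (Pi.single i 1 : Fin u → F) := by
    funext j
    by_cases hj : j = i
    · subst hj; simp
    · simp [Pi.single_apply, hj]
  rw [h, map_smul, smul_eq_mul]

private lemma surj_iff_li {n u : ℕ} (f : (Fin n → F) →ₗ[F] (Fin u → F)) :
    Surjective f ↔ LinearIndependent F (fun i => (LinearMap.proj i).comp f :
      Fin u → ((Fin n → F) →ₗ[F] F)) := by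
  rw [Fintype.linearIndependent_iff]
  constructor
  · intro hf c hc i
    obtain ⟨x, hx⟩ := hf (Pi.single i 1)
    have h1 := LinearMap.congr_fun hc x
    simp only [LinearMap.sum_apply, LinearMap.smul_apply, LinearMap.comp_apply,
      LinearMap.proj_apply, LinearMap.zero_apply, smul_eq_mul] at h1
    rw [hx] at h1
    simpa [Pi.single_apply] using h1
  · intro hli
    by_contra hsurj
    have hlt : LinearMap.range f < ⊤ :=
      lt_top_iff_ne_top.mpr (fun h => hsurj (LinearMap.range_eq_top.mp h))
    obtain ⟨φ, φ0, hker⟩ := (LinearMap.range f).exists_le_ker_of_lt_top hlt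
    have hc : ∑ i, φ (Pi.single i 1) • ((LinearMap.proj i).comp f) = 0 := by
      refine LinearMap.ext fun x => ?_
      have h1 : φ (f x) = 0 := hker ⟨x, rfl⟩
      rw [aux_eval] at h1
      simpa [mul_comm] using h1
    have hz := hli _ hc
    apply φ0
    refine LinearMap.ext fun y => ?_
    rw [aux_eval]
    simp [hz]

private def homPiEquiv (n u : ℕ) :
    ((Fin n → F) →ₗ[F] (Fin u → F)) ≃ (Fin u → ((Fin n → F) →ₗ[F] F)) where
  toFun f i := (LinearMap.proj i).comp f
  invFun s := LinearMap.pi s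
  left_inv f := LinearMap.ext fun x => rfl
  right_inv s := funext fun i => LinearMap.ext fun x => rfl

private lemma card_spanning (n u : ℕ) :
    Nat.card {w : Fin n → (Fin u → F) // Submodule.span F (Set.range w) = ⊤} =
      ∏ i : Fin u, (Fintype.card F ^ n - Fintype.card F ^ (i : ℕ)) := by
  by_cases hu : u ≤ n
  · have e1 : {w : Fin n → (Fin u → F) // Submodule.span F (Set.range w) = ⊤} ≃
        {f : (Fin n → F) →ₗ[F] (Fin u → F) // Surjective f} :=
      Equiv.subtypeEquiv ((Pi.basisFun F (Fin n)).constr F (M' := Fin u → F)).toEquiv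
        (fun w => by rw [← LinearMap.range_eq_top]; erw [Module.Basis.constr_range (S := F)])
    have e2 : {f : (Fin n → F) →ₗ[F] (Fin u → F) // Surjective f} ≃
        {s : Fin u → ((Fin n → F) →ₗ[F] F) // LinearIndependent F s} :=
      Equiv.subtypeEquiv (homPiEquiv n u) (fun f => surj_iff_li f)
    haveI : Finite ((Fin n → F) →ₗ[F] F) := Finite.of_injective _ DFunLike.coe_injective
    have hrank : Module.finrank F ((Fin n → F) →ₗ[F] F) = n := by
      rw [Module.finrank_linearMap, Module.finrank_fin_fun, Module.finrank_self, mul_one]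
    rw [Nat.card_congr (e1.trans e2), card_linearIndependent (by rw [hrank]; exact hu)]
    simp [hrank]
  · push_neg at hu
    haveI : IsEmpty {w : Fin n → (Fin u → F) // Submodule.span F (Set.range w) = ⊤} := by
      refine ⟨fun w => ?_⟩
      have h1 : Module.finrank F (Submodule.span F (Set.range w.1)) = u := by
        rw [w.2, finrank_top, Module.finrank_fin_fun]
      have h2 : Module.finrank F (Submodule.span F (Set.range w.1)) ≤ n := by
        classical
        haveI : Fintype (Set.range w.1) := Fintype.ofFinite _
        refine le_trans (finrank_span_le_card (R := F) (Set.range w.1)) ?_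
        rw [Set.toFinset_card]
        exact le_trans (Fintype.card_range_le w.1) (by simp)
      omega
    rw [Nat.card_of_isEmpty]
    symm
    refine Finset.prod_eq_zero (Finset.mem_univ (⟨n, hu⟩ : Fin u)) ?_
    simp

end SpanCount

private lemma descent {R : Type*} [AddCommGroup R] (p : ℕ)
    (M : AddSubgroup R) (hM : ∀ x : R, ∃ m ∈ M, ∃ t : R, x = m + p • t) :
    ∀ (j : ℕ) (x : R), ∃ y, x - p ^ j • y ∈ M := by
  intro j
  induction j with
  | zero => intro x; exact ⟨x, by rw [pow_zero, one_smul, sub_self]; exact M.zero_mem⟩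
  | succ j ih =>
      intro x
      obtain ⟨m, hm, t, rfl⟩ := hM x
      obtain ⟨y, hy⟩ := ih t
      refine ⟨y, ?_⟩
      have h : m + p • t - p ^ (j + 1) • y = m + p • (t - p ^ j • y) := by
        rw [smul_sub, ← mul_smul, ← pow_succ']
        abel
      rw [h]
      exact M.add_mem hm (AddSubgroup.nsmul_mem _ hy p)

private noncomputable def fiberEquiv {A B : Type*} [AddCommGroup A] [AddCommGroup B] (f : A →+ B)
    (hf : Surjective f) (P : B → Prop) :
    {a : A // P (f a)} ≃ {b : B // P b} × f.ker where
  toFun a := (⟨f a.1, a.2⟩, ⟨a.1 - surjInv hf (f a.1), by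
      simp [AddMonoidHom.mem_ker, map_sub, surjInv_eq hf]⟩)
  invFun x := ⟨surjInv hf x.1.1 + x.2.1, by
      have h2 : f x.2.1 = 0 := x.2.2
      have : f (surjInv hf x.1.1 + x.2.1) = x.1.1 := by
        rw [map_add, surjInv_eq hf, h2, add_zero]
      rw [this]
      exact x.1.2⟩
  left_inv a := Subtype.ext (add_sub_cancel _ _)
  right_inv := by
    rintro ⟨⟨b, hb⟩, ⟨k, hk⟩⟩
    have h2 : f k = 0 := hk
    have hfb : f (surjInv hf b + k) = b := by rw [map_add, surjInv_eq hf, h2, add_zero]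
    refine Prod.ext (Subtype.ext (by simpa using hfb)) (Subtype.ext ?_)
    simp only [hfb]
    abel

private lemma closure_eq_top_iff_span (q : ℕ) {M : Type*} [AddCommGroup M]
    [Module (ZMod q) M] (s : Set M) :
    AddSubgroup.closure s = ⊤ ↔ Submodule.span (ZMod q) s = ⊤ := by
  constructor
  · intro h
    rw [eq_top_iff]
    have hle : AddSubgroup.closure s ≤ (Submodule.span (ZMod q) s).toAddSubgroup :=
      (AddSubgroup.closure_le _).mpr Submodule.subset_span
    rw [h] at hle
    intro x _
    exact hle (AddSubgroup.mem_top x)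
  · intro h
    rw [eq_top_iff]
    have hle : Submodule.span (ZMod q) s ≤ AddSubgroup.toZModSubmodule q (AddSubgroup.closure s) :=
      Submodule.span_le.mpr AddSubgroup.subset_closure
    rw [h] at hle
    intro x _
    exact hle (Submodule.mem_top (x := x))

/-- Counting tuples of relations in the abelian setting: for `W = (ℤ/p^c)^g` with
Frattini subgroup `Φ(W) = pW`, a finite abelian `p`-group `G ≅ W/R` of exponent
exactly `p^c` with `R ≤ Φ(W)`, and `u = dim_{𝔽_p} R/pR`, the number of
`(g+1)`-tuples in `Φ(W)^{g+1}` generating `R` equals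
`|Φ(R)|^{g+1} · ∏_{k=1}^{u} (p^{g+1} − p^{u−k})`. -/
theorem stmt12 (p g c u : ℕ) (hp : p.Prime) (hodd : Odd p) (hc : 1 ≤ c) (hg : 1 ≤ g)
    (G : Type) [AddCommGroup G] [Finite G]
    (R : AddSubgroup (Fin g → ZMod (p ^ c)))
    (hR : R ≤ AddSubgroup.map (nsmulAddMonoidHom p : (Fin g → ZMod (p ^ c)) →+ _) ⊤)
    (hiso : Nonempty (((Fin g → ZMod (p ^ c)) ⧸ R) ≃+ G))
    (hexp : AddMonoid.exponent G = p ^ c)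
    (hu : Nat.card R =
      Nat.card (AddSubgroup.map (nsmulAddMonoidHom p : (Fin g → ZMod (p ^ c)) →+ _) R) * p ^ u) :
    Nat.card {v : Fin (g + 1) → (Fin g → ZMod (p ^ c)) //
        (∀ i, v i ∈ AddSubgroup.map (nsmulAddMonoidHom p : (Fin g → ZMod (p ^ c)) →+ _) ⊤) ∧
        AddSubgroup.closure (Set.range v) = R} =
      Nat.card (AddSubgroup.map (nsmulAddMonoidHom p : (Fin g → ZMod (p ^ c)) →+ _) R) ^ (g + 1) *
        ∏ k ∈ Finset.Icc 1 u, (p ^ (g + 1) - p ^ (u - k)) := by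
  classical
  haveI : NeZero (p ^ c) := ⟨pow_ne_zero c hp.ne_zero⟩
  haveI : Fact p.Prime := ⟨hp⟩
  haveI : NeZero p := ⟨hp.ne_zero⟩
  -- Step A : reduce to tuples valued in R generating ⊤
  have memR : ∀ v : Fin (g + 1) → (Fin g → ZMod (p ^ c)),
      AddSubgroup.closure (Set.range v) = R → ∀ i, v i ∈ R := fun v hv i =>
    hv ▸ AddSubgroup.subset_closure (Set.mem_range_self i)
  have keyiff : ∀ w : Fin (g + 1) → R,
      AddSubgroup.closure (Set.range w) = ⊤ ↔
      AddSubgroup.closure (Set.range fun i => ((w i : Fin g → ZMod (p ^ c)))) = R := by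
    intro w
    have h1 : (AddSubgroup.closure (Set.range w)).map R.subtype =
        AddSubgroup.closure (Set.range fun i => ((w i : Fin g → ZMod (p ^ c)))) := by
      rw [AddMonoidHom.map_closure, ← Set.range_comp]
      rfl
    have h2 : (⊤ : AddSubgroup R).map R.subtype = R := by
      rw [← AddMonoidHom.range_eq_map, AddSubgroup.range_subtype]
    constructor
    · intro h
      rw [← h1, h]
      exact h2
    · intro h
      apply AddSubgroup.map_injective R.subtype_injective
      rw [h1, h2]
      exact h
  have eA : {v : Fin (g + 1) → (Fin g → ZMod (p ^ c)) //
        (∀ i, v i ∈ AddSubgroup.map (nsmulAddMonoidHom p : (Fin g → ZMod (p ^ c)) →+ _) ⊤) ∧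
        AddSubgroup.closure (Set.range v) = R} ≃
      {w : Fin (g + 1) → R // AddSubgroup.closure (Set.range w) = ⊤} :=
    { toFun := fun v => ⟨fun i => ⟨v.1 i, memR v.1 v.2.2 i⟩, (keyiff _).mpr v.2.2⟩
      invFun := fun w => ⟨fun i => (w.1 i : Fin g → ZMod (p ^ c)),
        ⟨fun i => hR (w.1 i).2, (keyiff _).mp w.2⟩⟩
      left_inv := fun v => Subtype.ext rfl
      right_inv := fun w => Subtype.ext (funext fun i => Subtype.ext rfl) }
  -- the subgroup S = pR inside R, and the quotient
  set S : AddSubgroup R := AddSubgroup.map (nsmulAddMonoidHom p) ⊤ with hS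
  let π : R →+ R ⧸ S := QuotientAddGroup.mk' S
  haveI : Module (ZMod p) (R ⧸ S) := QuotientAddGroup.zmodModule (n := p)
    (fun x => AddSubgroup.mem_map.mpr ⟨x, AddSubgroup.mem_top x, rfl⟩)
  have hpc : ∀ x : R, p ^ c • x = 0 := by
    intro x
    apply Subtype.ext
    have hcoe : ((p ^ c • x : R) : Fin g → ZMod (p ^ c)) =
        p ^ c • (x : Fin g → ZMod (p ^ c)) := rfl
    rw [hcoe]
    funext i
    show p ^ c • ((x : Fin g → ZMod (p ^ c)) i) = 0
    rw [nsmul_eq_mul, ZMod.natCast_self, zero_mul]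
  -- Nakayama
  have nak : ∀ w : Fin (g + 1) → R,
      AddSubgroup.closure (Set.range w) = ⊤ ↔
      AddSubgroup.closure (Set.range (⇑π ∘ w)) = ⊤ := by
    intro w
    constructor
    · intro h
      rw [Set.range_comp, ← AddMonoidHom.map_closure, h, ← AddMonoidHom.range_eq_map]
      exact AddMonoidHom.range_eq_top.mpr (QuotientAddGroup.mk'_surjective S)
    · intro h
      rw [eq_top_iff]
      intro x _
      have hM : ∀ z : R, ∃ m ∈ AddSubgroup.closure (Set.range w), ∃ t : R, z = m + p • t := by
        intro z
        have hmap : (AddSubgroup.closure (Set.range w)).map π = ⊤ := by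
          rw [AddMonoidHom.map_closure, ← Set.range_comp, h]
        have hz : π z ∈ (AddSubgroup.closure (Set.range w)).map π := by
          rw [hmap]; exact AddSubgroup.mem_top _
        obtain ⟨m, hm, hmz⟩ := hz
        have h0 : π (z - m) = 0 := by rw [map_sub, hmz, sub_self]
        have hzm : z - m ∈ S := (QuotientAddGroup.eq_zero_iff _).mp h0
        rw [hS] at hzm
        obtain ⟨t, -, ht⟩ := hzm
        refine ⟨m, hm, t, ?_⟩
        have ht' : p • t = z - m := ht
        rw [ht', add_sub_cancel]
      obtain ⟨y, hy⟩ := descent p (AddSubgroup.closure (Set.range w)) hM c x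
      rwa [hpc y, sub_zero] at hy
  -- fibration over the quotient
  let Fpi : (Fin (g + 1) → R) →+ (Fin (g + 1) → R ⧸ S) :=
    { toFun := fun w => ⇑π ∘ w
      map_zero' := by funext i; simp
      map_add' := fun a b => by funext i; simp }
  have hFpi : Surjective Fpi := fun q =>
    ⟨fun i => surjInv (QuotientAddGroup.mk'_surjective S) (q i),
      funext fun i => surjInv_eq _ _⟩
  have hcardB : Nat.card {w : Fin (g + 1) → R //
        AddSubgroup.closure (Set.range (⇑π ∘ w)) = ⊤} =
      Nat.card {q : Fin (g + 1) → R ⧸ S // AddSubgroup.closure (Set.range q) = ⊤} *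
        Nat.card Fpi.ker := by
    have := Nat.card_congr
      (fiberEquiv Fpi hFpi (fun q => AddSubgroup.closure (Set.range q) = ⊤))
    rw [Nat.card_prod] at this
    exact this
  -- ker card
  have hker : Nat.card Fpi.ker = Nat.card S ^ (g + 1) := by
    have e : Fpi.ker ≃ (Fin (g + 1) → S) :=
      { toFun := fun w i => ⟨w.1 i, by
          have hw := congrFun (AddMonoidHom.mem_ker.mp w.2) i
          exact (QuotientAddGroup.eq_zero_iff (w.1 i)).mp hw⟩
        invFun := fun s => ⟨fun i => (s i : R), by
          rw [AddMonoidHom.mem_ker]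
          funext i
          exact (QuotientAddGroup.eq_zero_iff _).mpr (s i).2⟩
        left_inv := fun w => Subtype.ext rfl
        right_inv := fun s => funext fun i => Subtype.ext rfl }
    rw [Nat.card_congr e, Nat.card_fun]
    simp [Nat.card_eq_fintype_card]
  -- card S = card Φ(R)
  have hSΦ : Nat.card S =
      Nat.card (AddSubgroup.map (nsmulAddMonoidHom p : (Fin g → ZMod (p ^ c)) →+ _) R) := by
    have h1 : S.map R.subtype =
        AddSubgroup.map (nsmulAddMonoidHom p : (Fin g → ZMod (p ^ c)) →+ _) R := by
      rw [hS, AddSubgroup.map_map]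
      have hcomm : (R.subtype.comp (nsmulAddMonoidHom p : R →+ R)) =
          (nsmulAddMonoidHom p : (Fin g → ZMod (p ^ c)) →+ _).comp R.subtype := by
        ext x; rfl
      rw [hcomm, ← AddSubgroup.map_map, ← AddMonoidHom.range_eq_map, AddSubgroup.range_subtype]
    rw [← h1]
    exact Nat.card_congr (AddSubgroup.equivMapOfInjective S R.subtype R.subtype_injective).toEquiv
  -- card of the quotient
  have hcardR : Nat.card R = Nat.card (R ⧸ S) * Nat.card S :=
    AddSubgroup.card_eq_card_quotient_mul_card_addSubgroup S
  have hSpos : 0 < Nat.card S := Nat.card_pos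
  have hQcard : Nat.card (R ⧸ S) = p ^ u := by
    refine Nat.eq_of_mul_eq_mul_right hSpos ?_
    rw [← hcardR, hu, ← hSΦ, mul_comm]
  -- finrank of the quotient
  haveI : Finite (R ⧸ S) := Quotient.finite _
  have hfinrank : Module.finrank (ZMod p) (R ⧸ S) = u := by
    haveI : Fintype (R ⧸ S) := Fintype.ofFinite _
    have h1 : Fintype.card (R ⧸ S) =
        Fintype.card (ZMod p) ^ Module.finrank (ZMod p) (R ⧸ S) := Module.card_eq_pow_finrank
    rw [ZMod.card] at h1
    have h2 : p ^ u = p ^ Module.finrank (ZMod p) (R ⧸ S) := by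
      rw [← h1, ← Nat.card_eq_fintype_card, hQcard]
    exact (Nat.pow_right_injective hp.two_le h2).symm
  let bQ : Module.Basis (Fin u) (ZMod p) (R ⧸ S) :=
    Module.finBasisOfFinrankEq (ZMod p) (R ⧸ S) hfinrank
  let eQ : (R ⧸ S) ≃ₗ[ZMod p] (Fin u → ZMod p) := bQ.equivFun
  -- count spanning tuples in the quotient
  have hcardQ : Nat.card {q : Fin (g + 1) → R ⧸ S // AddSubgroup.closure (Set.range q) = ⊤} =
      ∏ i : Fin u, (p ^ (g + 1) - p ^ (i : ℕ)) := by
    have e1 : {q : Fin (g + 1) → R ⧸ S // AddSubgroup.closure (Set.range q) = ⊤} ≃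
        {q : Fin (g + 1) → R ⧸ S // Submodule.span (ZMod p) (Set.range q) = ⊤} :=
      Equiv.subtypeEquivRight (fun q => closure_eq_top_iff_span p _)
    have e2 : {q : Fin (g + 1) → R ⧸ S // Submodule.span (ZMod p) (Set.range q) = ⊤} ≃
        {w : Fin (g + 1) → (Fin u → ZMod p) // Submodule.span (ZMod p) (Set.range w) = ⊤} :=
      Equiv.subtypeEquiv (Equiv.piCongrRight (fun _ => eQ.toEquiv)) (fun q => by
        have hrange : Set.range (fun i => eQ (q i)) =
            ⇑(eQ : (R ⧸ S) →ₗ[ZMod p] (Fin u → ZMod p)) '' Set.range q := by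
          rw [← Set.range_comp]; rfl
        have hmap : Submodule.span (ZMod p) (Set.range fun i => eQ (q i)) =
            Submodule.map (eQ : (R ⧸ S) →ₗ[ZMod p] (Fin u → ZMod p))
              (Submodule.span (ZMod p) (Set.range q)) := by
          rw [hrange, Submodule.span_image]
        constructor
        · intro hq
          show Submodule.span (ZMod p) (Set.range fun i => eQ (q i)) = ⊤
          rw [hmap, hq, Submodule.map_top, LinearEquiv.range]
        · intro hq
          have hq' : Submodule.span (ZMod p) (Set.range fun i => eQ (q i)) = ⊤ := hq
          rw [hmap] at hq'
          exact Submodule.map_injective_of_injective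
            (f := (eQ : (R ⧸ S) →ₗ[ZMod p] (Fin u → ZMod p))) eQ.injective
            (by rw [hq', Submodule.map_top, LinearEquiv.range]))
    rw [Nat.card_congr (e1.trans e2), card_spanning, ZMod.card]
  -- reindex the product
  have hprod : ∏ i : Fin u, (p ^ (g + 1) - p ^ (i : ℕ)) =
      ∏ k ∈ Finset.Icc 1 u, (p ^ (g + 1) - p ^ (u - k)) := by
    rw [Fin.prod_univ_eq_prod_range (fun i => p ^ (g + 1) - p ^ i) u]
    rw [← Finset.prod_range_reflect (fun j => p ^ (g + 1) - p ^ j) u]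
    rw [show Finset.Icc 1 u = Finset.Ico 1 (u + 1) by rw [Finset.Ico_add_one_right_eq_Icc]]
    rw [Finset.prod_Ico_eq_prod_range]
    refine Finset.prod_congr (by simp) ?_
    intro j hj
    rw [show u - 1 - j = u - (1 + j) from by omega]
  -- assemble
  rw [Nat.card_congr (eA.trans (Equiv.subtypeEquivRight nak)), hcardB, hker, hcardQ, hSΦ,
    hprod, mul_comm]
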